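/- Let Ω be a convex open subset of ℝⁿ and let f : ℝⁿ → ℝ be differentiable at every point of Ω. Let M be the essential supremum of ‖∇f‖ over Ω with respect to Lebesgue measure, and assume M < ∞. Then f is Lipschitz on Ω with constant M: for all x, y ∈ Ω, |f(x) − f(y)| ≤ M · |x − y|. -/

import Mathlib

open MeasureTheory ENNReal NNReal Metric Set

set_option maxHeartbeats 1000000 in
/-- If `f : ℝⁿ → ℝ` is differentiable at every point of a convex open set `Ω` and the essential
supremum `M` of `‖∇f‖` over `Ω` (with respect to Lebesgue measure) is finite, then `f` is
Lipschitz on `Ω` with constant `M`. -/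
theorem stmt_8 {n : ℕ} (Ω : Set (EuclideanSpace ℝ (Fin n))) (hΩ : IsOpen Ω)
    (hconv : Convex ℝ Ω) (f : EuclideanSpace ℝ (Fin n) → ℝ)
    (hdiff : ∀ x ∈ Ω, DifferentiableAt ℝ f x)
    (M : ℝ≥0∞)
    (hM : M = essSup (fun x => (‖fderiv ℝ f x‖₊ : ℝ≥0∞)) (volume.restrict Ω))
    (hMfin : M ≠ ∞) :
    ∀ x ∈ Ω, ∀ y ∈ Ω, |f x - f y| ≤ M.toReal * dist x y := by
  intro x hx y hy
  have hmeas : Measurable (fderiv ℝ f) := measurable_fderiv ℝ f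
  set C := M.toReal with hCdef
  set v := x - y with hvdef
  -- the bad set is null
  set N : Set (EuclideanSpace ℝ (Fin n)) := Ω ∩ {z | C < ‖fderiv ℝ f z‖} with hNdef
  have hNmeas : MeasurableSet N :=
    hΩ.measurableSet.inter (measurableSet_lt measurable_const hmeas.norm)
  have hNnull : volume N = 0 := by
    have h1 : ∀ᵐ z ∂(volume.restrict Ω), (‖fderiv ℝ f z‖₊ : ℝ≥0∞) ≤ M := by
      rw [hM]; exact ENNReal.ae_le_essSup _
    have h2 : ∀ᵐ z ∂(volume.restrict Ω), ‖fderiv ℝ f z‖ ≤ C := by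
      filter_upwards [h1] with z hz
      have := (ENNReal.toReal_le_toReal (by simp) hMfin).mpr hz
      simpa using this
    have h3 := (ae_restrict_iff' hΩ.measurableSet).mp h2
    rw [ae_iff] at h3
    refine measure_mono_null ?_ h3
    intro z hz h
    exact absurd (h hz.1) (not_le.mpr hz.2)
  -- thickening of the segment
  have hseg : segment ℝ y x ⊆ Ω := hconv.segment_subset hy hx
  have hsegcompact : IsCompact (segment ℝ y x) := by
    rw [segment_eq_image]
    exact isCompact_Icc.image (by continuity)
  obtain ⟨δ, hδpos, hδ⟩ := hsegcompact.exists_thickening_subset_open hΩ hseg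
  have hmem : ∀ w : EuclideanSpace ℝ (Fin n), ‖w‖ < δ → ∀ s ∈ Icc (0:ℝ) 1,
      y + w + s • v ∈ Ω := by
    intro w hw s hs
    apply hδ
    rw [mem_thickening_iff]
    refine ⟨y + s • v, ⟨1 - s, s, by linarith [hs.2], hs.1, by ring, by module⟩, ?_⟩
    have h : (y + w + s • v) - (y + s • v) = w := by abel
    rw [dist_eq_norm, h]; exact hw
  -- Fubini: for a.e. w, the bad set on the line through y+w is null
  set g : ℝ × EuclideanSpace ℝ (Fin n) → EuclideanSpace ℝ (Fin n) :=
    fun p => y + p.2 + p.1 • v with hgdef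
  have hgcont : Continuous g := by
    apply Continuous.add
    · exact continuous_const.add continuous_snd
    · exact continuous_fst.smul continuous_const
  set E' : Set (ℝ × EuclideanSpace ℝ (Fin n)) := g ⁻¹' N with hE'def
  have hE'meas : MeasurableSet E' := hgcont.measurable hNmeas
  have hE'null : ((volume : Measure ℝ).prod volume) E' = 0 := by
    rw [Measure.measure_prod_null hE'meas]
    refine ae_of_all _ fun s => ?_
    show volume (Prod.mk s ⁻¹' E') = 0
    have h : Prod.mk s ⁻¹' E' = (fun w => (y + s • v) + w) ⁻¹' N := by
      ext w
      have hcomm : y + w + s • v = y + s • v + w := by abel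
      simp only [mem_preimage, hE'def, hgdef, hcomm]
    rw [h, measure_preimage_add]
    exact hNnull
  set E2 : Set (EuclideanSpace ℝ (Fin n) × ℝ) := Prod.swap ⁻¹' E' with hE2def
  have hE2meas : MeasurableSet E2 := measurable_swap hE'meas
  have hE2null : ((volume : Measure (EuclideanSpace ℝ (Fin n))).prod volume) E2 = 0 := by
    have hswap := Measure.prod_swap (μ := (volume : Measure ℝ))
      (ν := (volume : Measure (EuclideanSpace ℝ (Fin n))))
    calc ((volume : Measure (EuclideanSpace ℝ (Fin n))).prod volume) E2
        = (((volume : Measure ℝ).prod volume).map Prod.swap) E2 := by rw [hswap]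
      _ = ((volume : Measure ℝ).prod volume) (Prod.swap ⁻¹' E2) := by
          rw [Measure.map_apply measurable_swap hE2meas]
      _ = ((volume : Measure ℝ).prod volume) E' := by
          congr 1
      _ = 0 := hE'null
  have hae_w : ∀ᵐ w : EuclideanSpace ℝ (Fin n),
      volume {s : ℝ | y + w + s • v ∈ N} = 0 := by
    filter_upwards [(Measure.measure_prod_null hE2meas).mp hE2null] with w hw
    exact hw
  -- the key a.e. estimate
  have main : ∀ᵐ w : EuclideanSpace ℝ (Fin n),
      w ∈ ball (0 : EuclideanSpace ℝ (Fin n)) δ →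
        |f (x + w) - f (y + w)| ≤ C * ‖v‖ := by
    filter_upwards [hae_w] with w hw hwball
    have hwn : ‖w‖ < δ := by simpa [mem_ball, dist_eq_norm] using hwball
    set p : ℝ → EuclideanSpace ℝ (Fin n) := fun s => y + w + s • v with hpdef
    have hpΩ : ∀ s ∈ Icc (0:ℝ) 1, p s ∈ Ω := hmem w hwn
    have hpcont : Continuous p := continuous_const.add (continuous_id.smul continuous_const)
    set g' : ℝ → ℝ := fun s => fderiv ℝ f (p s) v with hg'def
    have hg'meas : Measurable g' :=
      ((ContinuousLinearMap.apply ℝ ℝ v).continuous.measurable).comp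
        (hmeas.comp hpcont.measurable)
    have hderiv : ∀ s ∈ uIcc (0:ℝ) 1, HasDerivAt (fun t => f (p t)) (g' s) s := by
      intro s hs
      rw [uIcc_of_le zero_le_one] at hs
      have hps : p s ∈ Ω := hpΩ s hs
      have h1 : HasDerivAt p v s := by
        have := ((hasDerivAt_id s).smul_const v).const_add (y + w)
        simpa [hpdef] using this
      have h2 := (hdiff _ hps).hasFDerivAt
      exact h2.comp_hasDerivAt s h1
    have hgood : ∀ᵐ s : ℝ, p s ∉ N := by
      rw [ae_iff]; simpa [not_not] using hw
    have hbound : ∀ᵐ s ∂(volume.restrict (Set.uIoc (0:ℝ) 1)), ‖g' s‖ ≤ C * ‖v‖ := by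
      filter_upwards [ae_restrict_of_ae hgood, ae_restrict_mem measurableSet_uIoc]
        with s h1 h2
      have hs01 : s ∈ Icc (0:ℝ) 1 := by
        rw [uIoc_of_le zero_le_one] at h2; exact Ioc_subset_Icc_self h2
      have hΩs := hpΩ s hs01
      have hle : ‖fderiv ℝ f (p s)‖ ≤ C := not_lt.mp fun hlt => h1 ⟨hΩs, hlt⟩
      calc ‖g' s‖ ≤ ‖fderiv ℝ f (p s)‖ * ‖v‖ := (fderiv ℝ f (p s)).le_opNorm v
        _ ≤ C * ‖v‖ := mul_le_mul_of_nonneg_right hle (norm_nonneg v)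
    have hint : IntervalIntegrable g' volume 0 1 := by
      rw [intervalIntegrable_iff]
      refine Integrable.mono' ((integrableOn_const_iff (C := C * ‖v‖)).mpr (Or.inr ?_))
        hg'meas.aestronglyMeasurable.restrict hbound
      rw [Set.uIoc_of_le zero_le_one]
      exact measure_Ioc_lt_top
    have hftc := intervalIntegral.integral_eq_sub_of_hasDerivAt hderiv hint
    have hb : ‖∫ s in (0:ℝ)..1, g' s‖ ≤ C * ‖v‖ := by
      have h := intervalIntegral.norm_integral_le_abs_of_norm_le
        (g := fun _ => C * ‖v‖) hbound (intervalIntegrable_const)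
      calc ‖∫ s in (0:ℝ)..1, g' s‖ ≤ |∫ _s in (0:ℝ)..1, C * ‖v‖| := h
        _ = C * ‖v‖ := by
            rw [intervalIntegral.integral_const]
            simp [abs_of_nonneg, mul_nonneg ENNReal.toReal_nonneg (norm_nonneg v)]
            exact Or.inl ENNReal.toReal_nonneg
    rw [hftc] at hb
    have hp1 : p 1 = x + w := by simp [hpdef, hvdef]; module
    have hp0 : p 0 = y + w := by simp [hpdef]
    rw [hp1, hp0] at hb
    simpa [Real.norm_eq_abs] using hb
  -- density argument: pass from a.e. w to w = 0
  set F : EuclideanSpace ℝ (Fin n) → ℝ := fun w => |f (x + w) - f (y + w)| with hFdef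
  have hFcont : ContinuousOn F (ball (0 : EuclideanSpace ℝ (Fin n)) δ) := by
    intro w hwball
    have hwn : ‖w‖ < δ := by simpa [mem_ball, dist_eq_norm] using hwball
    have hxw : x + w ∈ Ω := by
      have h := hmem w hwn 1 (by norm_num)
      have he : y + w + (1:ℝ) • v = x + w := by rw [hvdef]; module
      rwa [he] at h
    have hyw : y + w ∈ Ω := by
      have := hmem w hwn 0 (by norm_num)
      simpa using this
    apply ContinuousAt.continuousWithinAt
    apply ContinuousAt.abs
    apply ContinuousAt.sub
    · exact ((hdiff _ hxw).continuousAt).comp (by fun_prop)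
    · exact ((hdiff _ hyw).continuousAt).comp (by fun_prop)
  set S := ball (0 : EuclideanSpace ℝ (Fin n)) δ ∩ F ⁻¹' Ioi (C * ‖v‖) with hSdef
  have hSopen : IsOpen S := hFcont.isOpen_inter_preimage isOpen_ball isOpen_Ioi
  have hSnull : volume S = 0 := by
    rw [ae_iff] at main
    refine measure_mono_null ?_ main
    intro w hw h
    exact absurd (h hw.1) (not_le.mpr hw.2)
  have hSempty : S = ∅ := by
    by_contra h
    exact absurd hSnull (ne_of_gt (hSopen.measure_pos volume (nonempty_iff_ne_empty.mpr h)))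
  have h0 : (0 : EuclideanSpace ℝ (Fin n)) ∉ S := by rw [hSempty]; exact notMem_empty _
  have h0ball : (0 : EuclideanSpace ℝ (Fin n)) ∈ ball (0 : EuclideanSpace ℝ (Fin n)) δ :=
    mem_ball_self hδpos
  have hF0 : F 0 ≤ C * ‖v‖ := by
    by_contra h
    exact h0 ⟨h0ball, not_le.mp h⟩
  have : |f x - f y| ≤ C * ‖v‖ := by simpa [hFdef] using hF0
  rwa [dist_eq_norm]
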